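/- arXiv:1505.07749 — 3 statements merged into one kernel-verified Lean document; each statement's English description precedes it below -/
import Mathlib

section
/- For every z ∈ ℂⁿ, the function V(z) := ½ log([1+|z|²] + √((1+|z|²)² − |1+z²|²)) satisfies V(z) ≥ ½ log|1+z²| whenever 1+z² ≠ 0, with equality if and only if z ∈ ℝⁿ. -/
theorem extremal_ge_weight (n : ℕ) (z : Fin n → ℂ) (hz : 1 + ∑ j, (z j) ^ 2 ≠ 0) :
    (1 / 2) * Real.log (‖1 + ∑ j, (z j) ^ 2‖) ≤
      (1 / 2) * Real.log ((1 + ∑ j, (‖z j‖) ^ 2) +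
        Real.sqrt ((1 + ∑ j, (‖z j‖) ^ 2) ^ 2 -
          (‖1 + ∑ j, (z j) ^ 2‖) ^ 2)) ∧
    ((1 / 2) * Real.log ((1 + ∑ j, (‖z j‖) ^ 2) +
        Real.sqrt ((1 + ∑ j, (‖z j‖) ^ 2) ^ 2 -
          (‖1 + ∑ j, (z j) ^ 2‖) ^ 2)) =
      (1 / 2) * Real.log (‖1 + ∑ j, (z j) ^ 2‖) ↔ ∀ j, (z j).im = 0) := by
  set s : ℂ := ∑ j, (z j) ^ 2 with hs
  set P : ℝ := ∑ j, (z j).re ^ 2 with hPdef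
  set Q : ℝ := ∑ j, (z j).im ^ 2 with hQdef
  set R : ℝ := ∑ j, (z j).re * (z j).im with hRdef
  have hP : 0 ≤ P := Finset.sum_nonneg fun j _ => sq_nonneg _
  have hQ : 0 ≤ Q := Finset.sum_nonneg fun j _ => sq_nonneg _
  set B : ℝ := ‖1 + s‖ with hBdef
  have hB0 : 0 < B := by
    have := norm_ne_zero_iff.mpr hz
    exact norm_pos_iff.mpr hz
  have hAeq : (1 + ∑ j, (‖z j‖) ^ 2) = 1 + P + Q := by
    have h : ∀ j, (‖z j‖) ^ 2 = (z j).re ^ 2 + (z j).im ^ 2 := fun j => by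
      rw [Complex.sq_norm, Complex.normSq_apply]; ring
    simp_rw [h, Finset.sum_add_distrib]
    ring
  rw [hAeq]
  set A : ℝ := 1 + P + Q with hAdef
  have hA0 : 0 < A := by positivity
  have hre : (1 + s).re = 1 + P - Q := by
    have : s.re = P - Q := by
      rw [hs, Complex.re_sum, hPdef, hQdef, ← Finset.sum_sub_distrib]
      refine Finset.sum_congr rfl fun j _ => ?_
      simp [pow_two, Complex.mul_re]
    rw [Complex.add_re, Complex.one_re, this]; ring
  have him : (1 + s).im = 2 * R := by
    have : s.im = 2 * R := by
      rw [hs, Complex.im_sum, hRdef, Finset.mul_sum]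
      refine Finset.sum_congr rfl fun j _ => ?_
      simp [pow_two, Complex.mul_im]; ring
    simp [this]
  have hB2 : B ^ 2 = (1 + P - Q) ^ 2 + (2 * R) ^ 2 := by
    rw [hBdef, Complex.sq_norm, Complex.normSq_apply, hre, him]; ring
  have hCS : R ^ 2 ≤ P * Q := by
    simpa [hRdef, hPdef, hQdef] using
      Finset.sum_mul_sq_le_sq_mul_sq Finset.univ (fun j => (z j).re) (fun j => (z j).im)
  have hkey : B ^ 2 + 4 * Q ≤ A ^ 2 := by
    rw [hB2, hAdef]; nlinarith [hCS, hP, hQ]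
  have hBA : B ≤ A := by
    have h2 : B ^ 2 ≤ A ^ 2 := by nlinarith [hQ]
    nlinarith [hB0, hA0]
  have hSnn : 0 ≤ Real.sqrt (A ^ 2 - B ^ 2) := Real.sqrt_nonneg _
  have hASpos : 0 < A + Real.sqrt (A ^ 2 - B ^ 2) := by linarith
  constructor
  · have : Real.log B ≤ Real.log (A + Real.sqrt (A ^ 2 - B ^ 2)) :=
      Real.log_le_log hB0 (by linarith)
    linarith
  · constructor
    · intro heq
      have hlog : Real.log (A + Real.sqrt (A ^ 2 - B ^ 2)) = Real.log B := by linarith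
      have hAS : A + Real.sqrt (A ^ 2 - B ^ 2) = B :=
        Real.log_injOn_pos (Set.mem_Ioi.mpr hASpos) (Set.mem_Ioi.mpr hB0) hlog
      have hAB : A = B := by linarith
      have hQ0 : Q = 0 := by nlinarith [hkey]
      intro j
      have := (Finset.sum_eq_zero_iff_of_nonneg
        (fun j (_ : j ∈ Finset.univ) => sq_nonneg ((z j).im))).mp hQ0 j (Finset.mem_univ j)
      exact pow_eq_zero_iff (n := 2) (by norm_num) |>.mp this
    · intro h
      have hQ0 : Q = 0 := by
        rw [hQdef]; exact Finset.sum_eq_zero fun j _ => by rw [h j]; ring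
      have hR0 : R = 0 := by
        rw [hRdef]; exact Finset.sum_eq_zero fun j _ => by rw [h j]; ring
      have hAB : A = B := by
        have h2 : B ^ 2 = A ^ 2 := by rw [hB2, hAdef, hQ0, hR0]; ring
        have := congrArg Real.sqrt h2
        rwa [Real.sqrt_sq hB0.le, Real.sqrt_sq hA0.le, eq_comm] at this
      rw [← hAB]
      have : A ^ 2 - A ^ 2 = 0 := by ring
      rw [this, Real.sqrt_zero, add_zero]
end

section
/- For n = 1 and z ∈ ℂ, the formula ½ log([1+|z|²] + √((1+|z|²)² − |1+z²|²)) equals max(log|z−i|, log|z+i|). -/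
lemma aux_log_max (a b : ℝ) (ha : 0 ≤ a) (hb : 0 ≤ b)
    (hA : a = 0 → b = 2) (hB : b = 0 → a = 2) :
    (1 / 2) * Real.log ((a ^ 2 + b ^ 2) / 2 +
        Real.sqrt (((a ^ 2 + b ^ 2) / 2) ^ 2 - (a * b) ^ 2)) =
      max (Real.log a) (Real.log b) := by
  have hinner : (a ^ 2 + b ^ 2) / 2 +
      Real.sqrt (((a ^ 2 + b ^ 2) / 2) ^ 2 - (a * b) ^ 2) = (max a b) ^ 2 := by
    have h1 : ((a ^ 2 + b ^ 2) / 2) ^ 2 - (a * b) ^ 2 = ((a ^ 2 - b ^ 2) / 2) ^ 2 := by ring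
    rw [h1, Real.sqrt_sq_eq_abs]
    rcases le_total a b with h | h
    · rw [max_eq_right h, abs_of_nonpos (by nlinarith)]; ring
    · rw [max_eq_left h, abs_of_nonneg (by nlinarith)]; ring
  rw [hinner, Real.log_pow]
  have hlogmax : Real.log (max a b) = max (Real.log a) (Real.log b) := by
    rcases eq_or_lt_of_le ha with h0 | hpa
    · have hb2 : b = 2 := hA h0.symm
      subst hb2
      rw [← h0, max_eq_right (by norm_num), Real.log_zero,
        max_eq_right (Real.log_nonneg (by norm_num))]
    · rcases eq_or_lt_of_le hb with h0 | hpb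
      · have ha2 : a = 2 := hB h0.symm
        subst ha2
        rw [← h0, max_eq_left (by norm_num), Real.log_zero,
          max_eq_left (Real.log_nonneg (by norm_num))]
      · rcases le_total a b with h | h
        · rw [max_eq_right h, max_eq_right (Real.log_le_log hpa h)]
        · rw [max_eq_left h, max_eq_left (Real.log_le_log hpb h)]
  rw [hlogmax]; push_cast; ring

theorem one_var_formula (z : ℂ) :
    (1 / 2) * Real.log ((1 + ‖z‖ ^ 2) +
        Real.sqrt ((1 + ‖z‖ ^ 2) ^ 2 - ‖1 + z ^ 2‖ ^ 2)) =
      max (Real.log (‖z - Complex.I‖)) (Real.log (‖z + Complex.I‖)) := by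
  have hfac : (1 : ℂ) + z ^ 2 = (z - Complex.I) * (z + Complex.I) := by
    linear_combination Complex.I_sq
  have hab : ‖1 + z ^ 2‖ =
      ‖z - Complex.I‖ * ‖z + Complex.I‖ := by
    rw [hfac, norm_mul]
  have hsum : 1 + ‖z‖ ^ 2 =
      (‖z - Complex.I‖ ^ 2 + ‖z + Complex.I‖ ^ 2) / 2 := by
    simp only [Complex.sq_norm, Complex.normSq_apply, Complex.sub_re, Complex.sub_im,
      Complex.add_re, Complex.add_im, Complex.I_re, Complex.I_im, Complex.one_re]
    ring
  rw [hab, hsum]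
  apply aux_log_max _ _ (norm_nonneg _) (norm_nonneg _)
  · intro h
    have hz : z = Complex.I := by rwa [norm_eq_zero, sub_eq_zero] at h
    subst hz
    rw [show Complex.I + Complex.I = (2 : ℂ) * Complex.I by ring, norm_mul]
    simp
  · intro h
    have hz : z = -Complex.I := by
      rwa [norm_eq_zero, add_eq_zero_iff_eq_neg] at h
    subst hz
    rw [show -Complex.I - Complex.I = (-2 : ℂ) * Complex.I by ring, norm_mul]
    simp
end

section
/- The function g(z) := ½ log(1 + √(1 − |1+z²|²/(1+|z|²)²)) on ℂⁿ satisfies g(z) ≤ ½ log 2 for all z, and sup over z ∈ ℂⁿ of g(z) equals ½ log 2; e.g., g(i(1/√n,...,1/√n)) = ½ log 2. -/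
theorem alexander_capacity (n : ℕ) (hn : 0 < n) :
    (∀ z : Fin n → ℂ,
      (1 / 2) * Real.log (1 + Real.sqrt (1 -
          (‖1 + ∑ j, (z j) ^ 2‖) ^ 2 /
            (1 + ∑ j, (‖z j‖) ^ 2) ^ 2)) ≤ (1 / 2) * Real.log 2) ∧
    (1 / 2) * Real.log (1 + Real.sqrt (1 -
        (‖1 + ∑ j, ((fun _ : Fin n => Complex.I * (1 / Real.sqrt n)) j) ^ 2‖) ^ 2 /
          (1 + ∑ j, (‖(fun _ : Fin n => Complex.I * (1 / Real.sqrt n)) j‖) ^ 2) ^ 2)) =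
      (1 / 2) * Real.log 2 := by
  constructor
  · intro z
    set a := (‖1 + ∑ j, (z j) ^ 2‖) ^ 2 /
          (1 + ∑ j, (‖z j‖) ^ 2) ^ 2 with ha
    have ha0 : 0 ≤ a := by positivity
    have hs : Real.sqrt (1 - a) ≤ 1 := by
      have h := Real.sqrt_le_sqrt (show 1 - a ≤ 1 by linarith)
      simpa using h
    have hnn := Real.sqrt_nonneg (1 - a)
    have hle : Real.log (1 + Real.sqrt (1 - a)) ≤ Real.log 2 := by
      apply Real.log_le_log (by linarith)
      linarith
    linarith
  · have hn' : (0:ℝ) < n := by exact_mod_cast hn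
    have hsq : ((Real.sqrt n : ℂ)) ^ 2 = (n : ℂ) := by
      norm_cast
      rw [Real.sq_sqrt hn'.le]
    have key : ((Complex.I * (1 / (Real.sqrt n : ℂ))) ^ 2) = -(1/(n:ℂ)) := by
      rw [mul_pow, Complex.I_sq, div_pow, one_pow, hsq]
      ring
    have sum1 : ∑ _j : Fin n, ((Complex.I * (1 / (Real.sqrt n : ℂ))) ^ 2) = -1 := by
      rw [Finset.sum_const, Finset.card_univ, Fintype.card_fin, key, nsmul_eq_mul]
      have : (n:ℂ) ≠ 0 := by exact_mod_cast hn'.ne'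
      field_simp
    have habs : ‖Complex.I * (1 / Real.sqrt n)‖ ^ 2 = 1 / n := by
      rw [norm_mul, Complex.norm_I, one_mul, norm_div, norm_one, div_pow, one_pow]
      have h1 : ‖((Real.sqrt n : ℝ) : ℂ)‖ = Real.sqrt n := by
        rw [Complex.norm_real, Real.norm_of_nonneg (Real.sqrt_nonneg _)]
      rw [h1, Real.sq_sqrt hn'.le]
    have sum2 : ∑ _j : Fin n, (‖Complex.I * (1 / Real.sqrt n)‖) ^ 2 = 1 := by
      rw [Finset.sum_const, Finset.card_univ, Fintype.card_fin, habs, nsmul_eq_mul,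
        mul_one_div, div_self hn'.ne']
    simp only
    rw [sum1, sum2]
    norm_num
end
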